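/- arXiv:0802.0023 — 2 statements merged into one kernel-verified Lean document; each statement's English description precedes it below -/
import Mathlib

section
/- Let σ_{k,l}, k ∈ ℕ₀, l = 1,…,a_k, be non-negative measures with support in [0,∞) such that for every N ∈ ℕ₀ the sum C_N := Σ_{k=0}^∞ Σ_{l=1}^{a_k} ∫_0^∞ r^N r^{-k} dσ_{k,l}(r) is finite. Then for the functional T : ℂ[x_1,…,x_d] → ℂ defined by T(f) := Σ_{k=0}^{deg f} Σ_{l=1}^{a_k} ∫_0^∞ f_{k,l}(r) r^{-k} dσ_{k,l}(r) (with f_{k,l} the Laplace–Fourier coefficients of f) there exists a pseudo-positive, signed moment measure σ on ℝ^d such that T(f) = ∫_{ℝ^d} f dσ for all polynomials f. -/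
open MeasureTheory MvPolynomial Metric
open scoped ComplexOrder ENNReal

noncomputable section

/-- `d`-dimensional Euclidean space. -/
abbrev E (d : ℕ) := EuclideanSpace ℝ (Fin d)

/-- The (surface) measure `dθ` on the unit sphere `S^{d-1}`. -/
noncomputable def sphMeas (d : ℕ) : Measure (sphere (0 : E d) 1) :=
  (volume : Measure (E d)).toSphere

/-- A bundled orthonormal basis `Y_{k,l}`, `l = 1,…,a_k`, of the spaces `H_k(ℝ^d)` of
real-valued harmonic polynomials homogeneous of degree `k`, orthonormal with respect to
`⟨f,g⟩ = ∫_{S^{d-1}} f g dθ`. -/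
structure HarmonicBasis (d : ℕ) where
  a : ℕ → ℕ
  Y : (k : ℕ) → Fin (a k) → MvPolynomial (Fin d) ℝ
  harmonic : ∀ k l, (∑ i, pderiv i (pderiv i (Y k l))) = 0
  homogeneous : ∀ k l, (Y k l).IsHomogeneous k
  orthonormal : ∀ (k k' : ℕ) (l : Fin (a k)) (l' : Fin (a k')),
    (∫ θ : sphere (0 : E d) 1,
        (eval (fun i => (θ : E d) i) (Y k l)) * (eval (fun i => (θ : E d) i) (Y k' l'))
      ∂(sphMeas d)) = if k = k' ∧ (l : ℕ) = (l' : ℕ) then 1 else 0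
  complete : ∀ (k : ℕ) (P : MvPolynomial (Fin d) ℝ),
    (∑ i, pderiv i (pderiv i P)) = 0 → P.IsHomogeneous k →
      P ∈ Submodule.span ℝ (Set.range (Y k))

/-- Evaluation of a complex polynomial in `d` variables at a point of `ℝ^d`. -/
def evalC {d : ℕ} (P : MvPolynomial (Fin d) ℂ) (x : E d) : ℂ :=
  eval (fun i => (x i : ℂ)) P

/-- The polynomial `|x|² = x₁² + … + x_d²`. -/
def normSqP (d : ℕ) : MvPolynomial (Fin d) ℂ := ∑ i, X i ^ 2

/-- Integral of a (complex- or real-valued) function with respect to a signed measure,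
via the Jordan decomposition. -/
noncomputable def sInt {α : Type*} {G : Type*} [MeasurableSpace α] [NormedAddCommGroup G]
    [NormedSpace ℝ G] (μ : SignedMeasure α) (f : α → G) : G :=
  (∫ x, f x ∂μ.toJordanDecomposition.posPart) - ∫ x, f x ∂μ.toJordanDecomposition.negPart

/-- A signed measure is a moment measure if every polynomial is integrable with respect to
its total variation. -/
def IsMomentMeasure {d : ℕ} (μ : SignedMeasure (E d)) : Prop :=
  ∀ P : MvPolynomial (Fin d) ℂ, Integrable (evalC P) μ.totalVariation

namespace HarmonicBasis

variable {d : ℕ} (B : HarmonicBasis d)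

/-- `Y_{k,l}` as a function on `ℝ^d`. -/
def Yf (k : ℕ) (l : Fin (B.a k)) (x : E d) : ℝ := eval (fun i => x i) (B.Y k l)

/-- `Y_{k,l}` as a complex polynomial. -/
def YC (k : ℕ) (l : Fin (B.a k)) : MvPolynomial (Fin d) ℂ :=
  (B.Y k l).map (algebraMap ℝ ℂ)

/-- The Laplace–Fourier coefficient `f_{k,l}(r) = ∫_{S^{d-1}} f(rθ) Y_{k,l}(θ) dθ`. -/
noncomputable def lfCoeff (f : E d → ℂ) (k : ℕ) (l : Fin (B.a k)) (r : ℝ) : ℂ :=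
  ∫ θ : sphere (0 : E d) 1, f (r • (θ : E d)) * (B.Yf k l (θ : E d) : ℂ) ∂(sphMeas d)

/-- `GaussDecomp B f K p` : `p` is a Gauss (Laplace–Fourier) decomposition of the polynomial
`f`, i.e. `f(x) = ∑_{k=0}^{K} ∑_{l=1}^{a_k} p_{k,l}(|x|²) Y_{k,l}(x)` with `p_{k,l} = 0` for
`k > K`. -/
def GaussDecomp (f : MvPolynomial (Fin d) ℂ) (K : ℕ)
    (p : (k : ℕ) → Fin (B.a k) → Polynomial ℂ) : Prop :=
  (∀ k, K < k → ∀ l, p k l = 0) ∧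
    f = ∑ k ∈ Finset.range (K + 1), ∑ l,
      Polynomial.aeval (normSqP d) (p k l) * B.YC k l

/-- The component functional `T_{k,l}(p) = T(p(|x|²) Y_{k,l}(x))`. -/
def component (T : MvPolynomial (Fin d) ℂ → ℂ) (k : ℕ) (l : Fin (B.a k))
    (p : Polynomial ℂ) : ℂ :=
  T (Polynomial.aeval (normSqP d) p * B.YC k l)

/-- A functional `T` on `ℂ[x₁,…,x_d]` is pseudo-positive definite (w.r.t. the basis `Y_{k,l}`)
if `T_{k,l}(p* p) ≥ 0` and `T_{k,l}(t · p*(t) p(t)) ≥ 0` for all univariate `p` and all `k, l`. -/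
def PPD (T : MvPolynomial (Fin d) ℂ → ℂ) : Prop :=
  ∀ (k : ℕ) (l : Fin (B.a k)) (p : Polynomial ℂ),
    0 ≤ B.component T k l (p.map (starRingEnd ℂ) * p) ∧
    0 ≤ B.component T k l (Polynomial.X * (p.map (starRingEnd ℂ) * p))

/-- A signed measure `μ` on `ℝ^d` is pseudo-positive (w.r.t. the basis `Y_{k,l}`) if
`∫ h(|x|) Y_{k,l}(x) dμ ≥ 0` for every non-negative continuous compactly supported `h`. -/
def PseudoPositive (μ : SignedMeasure (E d)) : Prop :=
  ∀ (k : ℕ) (l : Fin (B.a k)) (h : ℝ → ℝ), Continuous h → HasCompactSupport h →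
    (∀ t, 0 ≤ h t) → 0 ≤ sInt μ (fun x => h ‖x‖ * B.Yf k l x)

/-- `ν` is the family of component measures `μ_{k,l}` of the signed measure `μ`, i.e.
`∫_0^∞ h dμ_{k,l} = ∫_{ℝ^d} h(|x|) Y_{k,l}(x) dμ` for all continuous compactly supported `h`. -/
def IsComponentFamily (μ : SignedMeasure (E d))
    (ν : (k : ℕ) → Fin (B.a k) → Measure ℝ) : Prop :=
  ∀ k l, (ν k l) (Set.Iio 0) = 0 ∧
    ∀ h : ℝ → ℝ, Continuous h → HasCompactSupport h →
      ∫ t, h t ∂(ν k l) = sInt μ (fun x => h ‖x‖ * B.Yf k l x)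

/-- The summability condition `C_N = ∑_{k,l} ∫_0^∞ r^N r^{-k} dσ_{k,l}(r) < ∞` for all `N`. -/
def SummCond (σ : (k : ℕ) → Fin (B.a k) → Measure ℝ) : Prop :=
  ∀ N : ℕ, (∑' k : ℕ, ∑ l, ∫⁻ r, (ENNReal.ofReal r) ^ N * ((ENNReal.ofReal r) ^ k)⁻¹
    ∂(σ k l)) < ⊤

end HarmonicBasis

/-- The set `W_τ^{Sti}` of all non-negative moment measures on `[0,∞)` having the same
moments as `τ`. -/
def WSti (τ : Measure ℝ) : Set (Measure ℝ) :=
  {ρ | ρ (Set.Iio 0) = 0 ∧ (∀ m : ℕ, Integrable (fun t => t ^ m) ρ) ∧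
    ∀ m : ℕ, ∫ t, t ^ m ∂ρ = ∫ t, t ^ m ∂τ}

/-- A measure `ν` on `[0,∞)` is determined in the sense of Stieltjes if it is the only
non-negative measure on `[0,∞)` with its moments. -/
def StieltjesDeterminate (ν : Measure ℝ) : Prop :=
  ∀ τ : Measure ℝ, τ ∈ WSti ν → τ = ν

/-! ### Auxiliary development -/

section Aux
variable {d : ℕ}

lemma eval_smul_of_isHomogeneous {n : ℕ} {P : MvPolynomial (Fin n) ℝ} {k : ℕ}
    (hP : P.IsHomogeneous k) (r : ℝ) (v : Fin n → ℝ) :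
    eval (fun i => r * v i) P = r ^ k * eval v P := by
  rw [eval_eq, eval_eq, Finset.mul_sum]
  refine Finset.sum_congr rfl fun m hm => ?_
  have hdeg : ∑ i ∈ m.support, m i = k := by
    have h := hP (mem_support_iff.mp hm)
    rw [← h]; simp [Finsupp.weight, Finsupp.linearCombination_apply, Finsupp.sum, Finsupp.degree]
  calc coeff m P * ∏ i ∈ m.support, (r * v i) ^ m i
      = coeff m P * ((∏ i ∈ m.support, r ^ m i) * ∏ i ∈ m.support, v i ^ m i) := by
        rw [← Finset.prod_mul_distrib]; simp [mul_pow]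
    _ = r ^ k * (coeff m P * ∏ i ∈ m.support, v i ^ m i) := by
        rw [Finset.prod_pow_eq_pow_sum, hdeg]; ring

lemma norm_sq_eq (x : E d) : ‖x‖^2 = ∑ i, (x i)^2 := by
  rw [EuclideanSpace.norm_eq, Real.sq_sqrt]
  · exact Finset.sum_congr rfl fun i _ => by rw [Real.norm_eq_abs, sq_abs]
  · exact Finset.sum_nonneg fun i _ => sq_nonneg _

lemma abs_coord_le_norm (x : E d) (i : Fin d) : |x i| ≤ ‖x‖ := by
  have h1 : |x i| = Real.sqrt ((x i)^2) := by rw [Real.sqrt_sq_eq_abs]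
  have h2 : ‖x‖ = Real.sqrt (‖x‖^2) := by rw [Real.sqrt_sq (norm_nonneg _)]
  rw [h1, h2, norm_sq_eq]
  apply Real.sqrt_le_sqrt
  exact Finset.single_le_sum (f := fun j => (x j)^2) (fun j _ => sq_nonneg _) (Finset.mem_univ i)

lemma continuous_evalC (P : MvPolynomial (Fin d) ℂ) : Continuous (evalC P) := by
  apply (MvPolynomial.continuous_eval (p := P)).comp
  exact continuous_pi fun i => Complex.continuous_ofReal.comp (PiLp.continuous_apply 2 _ i)

lemma evalC_normSqP (x : E d) : evalC (normSqP d) x = ((‖x‖^2 : ℝ) : ℂ) := by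
  rw [norm_sq_eq]
  simp [evalC, normSqP]

lemma evalC_aeval (q : Polynomial ℂ) (S : MvPolynomial (Fin d) ℂ) (x : E d) :
    evalC (Polynomial.aeval S q) x = q.eval (evalC S x) := by
  simp only [evalC, Polynomial.aeval_def]
  rw [Polynomial.hom_eval₂]
  have h : (eval (fun i => ((x i : ℝ) : ℂ))).comp (algebraMap ℂ (MvPolynomial (Fin d) ℂ))
      = RingHom.id ℂ := by ext c; simp
  rw [h]
  rfl

lemma poly_bound (P : MvPolynomial (Fin d) ℂ) :
    ∃ (C : ℝ) (N : ℕ), 0 ≤ C ∧ ∀ x : E d, ‖evalC P x‖ ≤ C * (1 + ‖x‖) ^ N := by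
  induction P using MvPolynomial.induction_on with
  | C r => exact ⟨‖r‖, 0, norm_nonneg _, fun x => by simp [evalC]⟩
  | add p q hp hq =>
    obtain ⟨C1, N1, hC1, h1⟩ := hp; obtain ⟨C2, N2, hC2, h2⟩ := hq
    refine ⟨C1 + C2, max N1 N2, add_nonneg hC1 hC2, fun x => ?_⟩
    have hb : (1:ℝ) ≤ 1 + ‖x‖ := by linarith [norm_nonneg x]
    have e1 : (1+‖x‖)^N1 ≤ (1+‖x‖)^(max N1 N2) := pow_le_pow_right₀ hb (le_max_left _ _)
    have e2 : (1+‖x‖)^N2 ≤ (1+‖x‖)^(max N1 N2) := pow_le_pow_right₀ hb (le_max_right _ _)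
    have h0 : evalC (p+q) x = evalC p x + evalC q x := by simp [evalC]
    rw [h0, add_mul]
    exact (norm_add_le _ _).trans (add_le_add ((h1 x).trans (by nlinarith))
      ((h2 x).trans (by nlinarith)))
  | mul_X p i hp =>
    obtain ⟨C, N, hC, h⟩ := hp
    refine ⟨C, N+1, hC, fun x => ?_⟩
    have h0 : evalC (p * X i) x = evalC p x * (x i : ℂ) := by simp [evalC]
    rw [h0, norm_mul, pow_succ, ← mul_assoc]
    have hxi : ‖(x i : ℂ)‖ ≤ 1 + ‖x‖ := by
      rw [Complex.norm_real, Real.norm_eq_abs]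
      exact (abs_coord_le_norm x i).trans (by linarith [norm_nonneg x])
    exact mul_le_mul ((h x)) hxi (norm_nonneg _) (by positivity)

/-! signed measure lemmas -/

section SM
variable {α : Type*} [MeasurableSpace α] (μp μn : Measure α)
  [IsFiniteMeasure μp] [IsFiniteMeasure μn]

lemma sm_apply (s : Set α) (hs : MeasurableSet s) :
    (((μp.toSignedMeasure - μn.toSignedMeasure).toJordanDecomposition.posPart) s).toReal
      - (((μp.toSignedMeasure - μn.toSignedMeasure).toJordanDecomposition.negPart) s).toReal
    = (μp s).toReal - (μn s).toReal := by
  set sm := μp.toSignedMeasure - μn.toSignedMeasure with hsm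
  have h1 : sm.toJordanDecomposition.posPart.toSignedMeasure
      - sm.toJordanDecomposition.negPart.toSignedMeasure = sm :=
    sm.toSignedMeasure_toJordanDecomposition
  have h2 := congrArg (fun v => v s) h1
  simp only [VectorMeasure.sub_apply] at h2
  rw [Measure.toSignedMeasure_apply_measurable hs,
    Measure.toSignedMeasure_apply_measurable hs] at h2
  simp only [measureReal_def] at h2
  rw [h2, hsm]
  simp only [VectorMeasure.sub_apply, Measure.toSignedMeasure_apply_measurable hs, measureReal_def]

lemma jordan_pos_le :
    (μp.toSignedMeasure - μn.toSignedMeasure).toJordanDecomposition.posPart ≤ μp := by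
  set j := (μp.toSignedMeasure - μn.toSignedMeasure).toJordanDecomposition with hj
  obtain ⟨t, ht, hpt, hnt⟩ := j.mutuallySingular
  refine Measure.le_intro fun A hA _ => ?_
  have hA' : j.posPart A = j.posPart (A ∩ tᶜ) := by
    have h0 : j.posPart (A ∩ t) = 0 := measure_mono_null Set.inter_subset_right hpt
    have hsplit : j.posPart A ≤ j.posPart (A ∩ t) + j.posPart (A ∩ tᶜ) := by
      refine le_trans (measure_mono ?_) (measure_union_le _ _)
      intro x hx; by_cases hxt : x ∈ t <;> simp [hx, hxt]
    have h2 : j.posPart (A ∩ tᶜ) ≤ j.posPart A := measure_mono Set.inter_subset_left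
    rw [h0, zero_add] at hsplit
    exact le_antisymm hsplit h2
  have hneg : j.negPart (A ∩ tᶜ) = 0 :=
    measure_mono_null Set.inter_subset_right hnt
  have key := sm_apply μp μn (A ∩ tᶜ) (hA.inter ht.compl)
  rw [hneg] at key
  simp only [ENNReal.toReal_zero, sub_zero] at key
  have hfin : j.posPart (A ∩ tᶜ) ≠ ⊤ := measure_ne_top _ _
  have h3 : j.posPart (A ∩ tᶜ) ≤ μp (A ∩ tᶜ) := by
    rw [← ENNReal.toReal_le_toReal hfin (measure_ne_top _ _), key]
    have : (0:ℝ) ≤ (μn (A ∩ tᶜ)).toReal := ENNReal.toReal_nonneg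
    linarith
  rw [hA']
  exact h3.trans (measure_mono Set.inter_subset_left)

lemma jordan_neg_le :
    (μp.toSignedMeasure - μn.toSignedMeasure).toJordanDecomposition.negPart ≤ μn := by
  set j := (μp.toSignedMeasure - μn.toSignedMeasure).toJordanDecomposition with hj
  obtain ⟨t, ht, hpt, hnt⟩ := j.mutuallySingular
  refine Measure.le_intro fun A hA _ => ?_
  have hA' : j.negPart A = j.negPart (A ∩ t) := by
    have h0 : j.negPart (A ∩ tᶜ) = 0 := measure_mono_null Set.inter_subset_right hnt
    have hsplit : j.negPart A ≤ j.negPart (A ∩ t) + j.negPart (A ∩ tᶜ) := by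
      refine le_trans (measure_mono ?_) (measure_union_le _ _)
      intro x hx; by_cases hxt : x ∈ t <;> simp [hx, hxt]
    have h2 : j.negPart (A ∩ t) ≤ j.negPart A := measure_mono Set.inter_subset_left
    rw [h0, add_zero] at hsplit
    exact le_antisymm hsplit h2
  have hpos : j.posPart (A ∩ t) = 0 :=
    measure_mono_null Set.inter_subset_right hpt
  have key := sm_apply μp μn (A ∩ t) (hA.inter ht)
  rw [hpos] at key
  simp only [ENNReal.toReal_zero, zero_sub] at key
  have hfin : j.negPart (A ∩ t) ≠ ⊤ := measure_ne_top _ _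
  have h3 : j.negPart (A ∩ t) ≤ μn (A ∩ t) := by
    rw [← ENNReal.toReal_le_toReal hfin (measure_ne_top _ _)]
    have h5 : -(j.negPart (A ∩ t)).toReal = (μp (A ∩ t)).toReal - (μn (A ∩ t)).toReal := key
    have h4 : (0:ℝ) ≤ (μp (A ∩ t)).toReal := ENNReal.toReal_nonneg
    linarith
  rw [hA']
  exact h3.trans (measure_mono Set.inter_subset_left)

lemma jordan_add_eq :
    (μp.toSignedMeasure - μn.toSignedMeasure).toJordanDecomposition.posPart + μn
      = (μp.toSignedMeasure - μn.toSignedMeasure).toJordanDecomposition.negPart + μp := by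
  set j := (μp.toSignedMeasure - μn.toSignedMeasure).toJordanDecomposition with hj
  ext A hA
  simp only [Measure.add_apply]
  have key := sm_apply μp μn A hA
  have h1 : j.posPart A ≠ ⊤ := measure_ne_top _ _
  have h2 : j.negPart A ≠ ⊤ := measure_ne_top _ _
  have h3 : μp A ≠ ⊤ := measure_ne_top _ _
  have h4 : μn A ≠ ⊤ := measure_ne_top _ _
  have h5 : (j.posPart A).toReal + (μn A).toReal = (j.negPart A).toReal + (μp A).toReal := by
    linarith
  have h6 := congrArg ENNReal.ofReal h5
  rwa [ENNReal.ofReal_add ENNReal.toReal_nonneg ENNReal.toReal_nonneg,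
    ENNReal.ofReal_add ENNReal.toReal_nonneg ENNReal.toReal_nonneg,
    ENNReal.ofReal_toReal h1, ENNReal.ofReal_toReal h2,
    ENNReal.ofReal_toReal h3, ENNReal.ofReal_toReal h4] at h6

lemma sInt_eq {G : Type*} [NormedAddCommGroup G] [NormedSpace ℝ G] (f : α → G)
    (hp : Integrable f μp) (hn : Integrable f μn) :
    sInt (μp.toSignedMeasure - μn.toSignedMeasure) f = (∫ x, f x ∂μp) - ∫ x, f x ∂μn := by
  set j := (μp.toSignedMeasure - μn.toSignedMeasure).toJordanDecomposition with hj
  have hip : Integrable f j.posPart := hp.mono_measure (jordan_pos_le μp μn)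
  have hin : Integrable f j.negPart := hn.mono_measure (jordan_neg_le μp μn)
  have key : (∫ x, f x ∂j.posPart) + ∫ x, f x ∂μn
      = (∫ x, f x ∂j.negPart) + ∫ x, f x ∂μp := by
    rw [← integral_add_measure hip hn, ← integral_add_measure hin hp, jordan_add_eq]
  unfold sInt
  rw [← hj]
  have h7 : ∫ x, f x ∂j.posPart = (∫ x, f x ∂j.negPart) + (∫ x, f x ∂μp) - ∫ x, f x ∂μn := by
    rw [← key]; abel
  rw [h7]; abel

lemma totalVariation_le :
    (μp.toSignedMeasure - μn.toSignedMeasure).totalVariation ≤ μp + μn := by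
  unfold SignedMeasure.totalVariation
  exact add_le_add (jordan_pos_le μp μn) (jordan_neg_le μp μn)

end SM

section Meas
variable {d : ℕ} (B : HarmonicBasis d)

noncomputable def sphereMap (d : ℕ) : ℝ × sphere (0:E d) 1 → E d := fun p => p.1 • (p.2 : E d)

lemma continuous_sphereMap : Continuous (sphereMap d) :=
  continuous_fst.smul (continuous_subtype_val.comp continuous_snd)

lemma norm_sphereMap (p : ℝ × sphere (0:E d) 1) : ‖sphereMap d p‖ = |p.1| := by
  have h : ‖(p.2 : E d)‖ = 1 := by
    have h2 := p.2.2
    rw [mem_sphere_iff_norm, sub_zero] at h2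
    exact h2
  rw [sphereMap, norm_smul, h, mul_one, Real.norm_eq_abs]

noncomputable def Dk (k : ℕ) : ℝ → ℝ≥0∞ := fun r => (ENNReal.ofReal r ^ k)⁻¹

lemma measurable_Dk (k : ℕ) : Measurable (Dk k) :=
  ((ENNReal.measurable_ofReal).pow_const k).inv

lemma continuous_Yf (k : ℕ) (l : Fin (B.a k)) : Continuous (fun x : E d => B.Yf k l x) := by
  unfold HarmonicBasis.Yf
  have h : Continuous (fun x : E d => (fun i => x i : Fin d → ℝ)) :=
    continuous_pi fun i => PiLp.continuous_apply 2 _ i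
  have h2 : Continuous fun v : Fin d → ℝ => eval v (B.Y k l) := MvPolynomial.continuous_eval _
  exact h2.comp h

lemma continuous_YfS (k : ℕ) (l : Fin (B.a k)) :
    Continuous (fun θ : sphere (0:E d) 1 => B.Yf k l (θ:E d)) :=
  (continuous_Yf B k l).comp continuous_subtype_val

lemma Yf_smul (k : ℕ) (l : Fin (B.a k)) (r : ℝ) (x : E d) :
    B.Yf k l (r • x) = r^k * B.Yf k l x := by
  unfold HarmonicBasis.Yf
  have h : (fun i => (r • x) i) = fun i => r * x i := by
    funext i; simp [PiLp.smul_apply]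
  rw [h, eval_smul_of_isHomogeneous (B.homogeneous k l)]

lemma integrable_sphere {G : Type*} [NormedAddCommGroup G] (g : sphere (0:E d) 1 → G)
    (hg : Continuous g) : Integrable g (sphMeas d) := by
  have : IsFiniteMeasure (sphMeas d) := by unfold sphMeas; infer_instance
  exact hg.integrable_of_hasCompactSupport
    (IsCompact.of_isClosed_subset isCompact_univ (isClosed_tsupport g) (Set.subset_univ _))

lemma ortho (k k' : ℕ) (l : Fin (B.a k)) (l' : Fin (B.a k')) :
    ∫ θ : sphere (0:E d) 1, B.Yf k l (θ:E d) * B.Yf k' l' (θ:E d) ∂(sphMeas d)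
      = if k = k' ∧ (l : ℕ) = (l' : ℕ) then 1 else 0 :=
  B.orthonormal k k' l l'

lemma lint_Y_sq (k : ℕ) (l : Fin (B.a k)) :
    ∫⁻ θ : sphere (0:E d) 1, ENNReal.ofReal ((B.Yf k l (θ:E d))^2) ∂(sphMeas d) = 1 := by
  have hint : Integrable (fun θ : sphere (0:E d) 1 => (B.Yf k l (θ:E d))^2) (sphMeas d) :=
    integrable_sphere _ ((continuous_YfS B k l).pow 2)
  rw [← ofReal_integral_eq_lintegral_ofReal hint
    (Filter.Eventually.of_forall fun θ => sq_nonneg _)]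
  have h2 : ∫ θ : sphere (0:E d) 1, (B.Yf k l (θ:E d))^2 ∂(sphMeas d) = 1 := by
    have h4 := ortho B k k l l
    simp only [and_self, if_true] at h4
    have h3 : (fun θ : sphere (0:E d) 1 => B.Yf k l (θ:E d) ^ 2)
        = fun θ : sphere (0:E d) 1 => B.Yf k l (θ:E d) * B.Yf k l (θ:E d) := funext fun θ => sq _
    rw [h3]
    exact h4
  rw [h2, ENNReal.ofReal_one]

variable (σ : (k : ℕ) → Fin (B.a k) → Measure ℝ)

noncomputable def nuM (k : ℕ) (l : Fin (B.a k)) : Measure ℝ := (σ k l).withDensity (Dk k)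

noncomputable def thp (k : ℕ) (l : Fin (B.a k)) : Measure (sphere (0:E d) 1) :=
  (sphMeas d).withDensity fun θ => ENNReal.ofReal (B.Yf k l (θ:E d))

noncomputable def thn (k : ℕ) (l : Fin (B.a k)) : Measure (sphere (0:E d) 1) :=
  (sphMeas d).withDensity fun θ => ENNReal.ofReal (- B.Yf k l (θ:E d))

lemma th_univ_le {k : ℕ} {l : Fin (B.a k)} {s : ℝ} (hs : s = 1 ∨ s = -1) (m : Measure _)
    (hm : m = (sphMeas d).withDensity fun θ => ENNReal.ofReal (s * B.Yf k l (θ:E d))) :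
    m Set.univ ≤ sphMeas d Set.univ + 1 := by
  have hmeas : Measurable fun θ : sphere (0:E d) 1 => ENNReal.ofReal (s * B.Yf k l (θ:E d)) :=
    (ENNReal.measurable_ofReal).comp ((continuous_YfS B k l).const_smul s).measurable
  have h1 : m Set.univ = ∫⁻ θ, ENNReal.ofReal (s * B.Yf k l (θ:E d)) ∂(sphMeas d) := by
    rw [hm, withDensity_apply _ MeasurableSet.univ, Measure.restrict_univ]
  have hpt : ∀ θ : sphere (0:E d) 1, ENNReal.ofReal (s * B.Yf k l (θ:E d))
      ≤ 1 + ENNReal.ofReal ((B.Yf k l (θ:E d))^2) := by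
    intro θ
    set y := B.Yf k l (θ:E d)
    have hr : s * y ≤ 1 + y^2 := by
      rcases hs with h | h <;> subst h <;> nlinarith [sq_nonneg (y-1), sq_nonneg (y+1)]
    calc ENNReal.ofReal (s * y) ≤ ENNReal.ofReal (1 + y^2) := ENNReal.ofReal_le_ofReal hr
      _ ≤ 1 + ENNReal.ofReal (y^2) := by
          rw [ENNReal.ofReal_add zero_le_one (sq_nonneg _), ENNReal.ofReal_one]
  calc m Set.univ ≤ ∫⁻ θ, (1 + ENNReal.ofReal ((B.Yf k l (θ:E d))^2)) ∂(sphMeas d) := by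
        rw [h1]; exact lintegral_mono hpt
    _ = sphMeas d Set.univ + 1 := by
        rw [lintegral_add_left measurable_const, lintegral_const, lint_Y_sq B k l, one_mul]

lemma thp_univ_le (k : ℕ) (l : Fin (B.a k)) : thp B k l Set.univ ≤ sphMeas d Set.univ + 1 :=
  th_univ_le B (Or.inl rfl) _ (by rw [thp]; congr 1; funext θ; rw [one_mul])

lemma thn_univ_le (k : ℕ) (l : Fin (B.a k)) : thn B k l Set.univ ≤ sphMeas d Set.univ + 1 :=
  th_univ_le B (Or.inr rfl) _ (by rw [thn]; congr 1; funext θ; rw [neg_one_mul])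

lemma sphMeas_univ_lt : sphMeas d Set.univ < ⊤ := by
  have : IsFiniteMeasure (sphMeas d) := by unfold sphMeas; infer_instance
  exact measure_lt_top _ _

lemma thp_fin (k : ℕ) (l : Fin (B.a k)) : IsFiniteMeasure (thp B k l) :=
  ⟨lt_of_le_of_lt (thp_univ_le B k l) (by
    exact ENNReal.add_lt_top.mpr ⟨sphMeas_univ_lt, ENNReal.one_lt_top⟩)⟩

lemma thn_fin (k : ℕ) (l : Fin (B.a k)) : IsFiniteMeasure (thn B k l) :=
  ⟨lt_of_le_of_lt (thn_univ_le B k l) (by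
    exact ENNReal.add_lt_top.mpr ⟨sphMeas_univ_lt, ENNReal.one_lt_top⟩)⟩

lemma nu_lint (N k : ℕ) (l : Fin (B.a k)) :
    ∫⁻ r, (ENNReal.ofReal r)^N ∂(nuM B σ k l)
      = ∫⁻ r, (ENNReal.ofReal r)^N * ((ENNReal.ofReal r)^k)⁻¹ ∂(σ k l) := by
  rw [nuM, lintegral_withDensity_eq_lintegral_mul _ (measurable_Dk k)
    ((ENNReal.measurable_ofReal).pow_const N)]
  congr 1; funext r; exact mul_comm _ _

lemma hsum_lt (hsum : B.SummCond σ) (N : ℕ) :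
    ∑' i : (k : ℕ) × Fin (B.a k), ∫⁻ r, (ENNReal.ofReal r)^N ∂(nuM B σ i.1 i.2) < ⊤ := by
  have h1 : ∀ i : (k : ℕ) × Fin (B.a k), ∫⁻ r, (ENNReal.ofReal r)^N ∂(nuM B σ i.1 i.2)
      = ∫⁻ r, (ENNReal.ofReal r)^N * ((ENNReal.ofReal r)^i.1)⁻¹ ∂(σ i.1 i.2) :=
    fun i => nu_lint B σ N i.1 i.2
  calc ∑' i : (k : ℕ) × Fin (B.a k), ∫⁻ r, (ENNReal.ofReal r)^N ∂(nuM B σ i.1 i.2)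
      = ∑' k, ∑' l : Fin (B.a k), ∫⁻ r, (ENNReal.ofReal r)^N * ((ENNReal.ofReal r)^k)⁻¹
          ∂(σ k l) := by
        rw [tsum_congr h1]
        exact ENNReal.tsum_sigma
          (fun k l => ∫⁻ r, (ENNReal.ofReal r)^N * ((ENNReal.ofReal r)^k)⁻¹ ∂(σ k l))
    _ = ∑' k, ∑ l, ∫⁻ r, (ENNReal.ofReal r)^N * ((ENNReal.ofReal r)^k)⁻¹ ∂(σ k l) := by
        exact tsum_congr fun k => tsum_fintype _
    _ < ⊤ := hsum N

lemma nu_univ_eq (k : ℕ) (l : Fin (B.a k)) :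
    nuM B σ k l Set.univ = ∫⁻ r, (ENNReal.ofReal r)^0 ∂(nuM B σ k l) := by
  simp

lemma nu_fin (hsum : B.SummCond σ) (k : ℕ) (l : Fin (B.a k)) :
    IsFiniteMeasure (nuM B σ k l) := by
  constructor
  rw [nu_univ_eq]
  exact lt_of_le_of_lt (ENNReal.le_tsum (⟨k, l⟩ : (k : ℕ) × Fin (B.a k))) (hsum_lt B σ hsum 0)

lemma nu_Iio (hpos : ∀ k l, (σ k l) (Set.Iio 0) = 0) (k : ℕ) (l : Fin (B.a k)) :
    nuM B σ k l (Set.Iio 0) = 0 := by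
  rw [nuM, withDensity_apply _ measurableSet_Iio]
  exact setLIntegral_measure_zero _ _ (hpos k l)

noncomputable def mup : Measure (E d) :=
  Measure.sum fun i : (k : ℕ) × Fin (B.a k) =>
    Measure.map (sphereMap d) ((nuM B σ i.1 i.2).prod (thp B i.1 i.2))

noncomputable def mun : Measure (E d) :=
  Measure.sum fun i : (k : ℕ) × Fin (B.a k) =>
    Measure.map (sphereMap d) ((nuM B σ i.1 i.2).prod (thn B i.1 i.2))

end Meas

section Bound
variable {d : ℕ} (B : HarmonicBasis d)

lemma real_pow_bound {r : ℝ} (hr : 0 ≤ r) (N : ℕ) : (1+r)^N ≤ 2^N * (1 + r^N) := by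
  rcases le_total r 1 with h | h
  · have h1 : (1+r)^N ≤ 2^N := pow_le_pow_left₀ (by linarith) (by linarith) N
    nlinarith [pow_nonneg hr N, pow_pos (zero_lt_two (α := ℝ)) N]
  · have h1 : (1+r)^N ≤ (2*r)^N := pow_le_pow_left₀ (by linarith) (by linarith) N
    rw [mul_pow] at h1
    nlinarith [pow_pos (lt_of_lt_of_le one_pos h) N, pow_pos (zero_lt_two (α := ℝ)) N]

lemma ennreal_pow_bound {C r : ℝ} (hC : 0 ≤ C) (hr : 0 ≤ r) (N : ℕ) :
    ENNReal.ofReal (C * (1+r)^N)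
      ≤ ENNReal.ofReal C * 2^N * (1 + (ENNReal.ofReal r)^N) := by
  calc ENNReal.ofReal (C * (1+r)^N) ≤ ENNReal.ofReal (C * (2^N * (1 + r^N))) := by
        apply ENNReal.ofReal_le_ofReal
        exact mul_le_mul_of_nonneg_left (real_pow_bound hr N) hC
    _ = ENNReal.ofReal C * 2^N * (1 + (ENNReal.ofReal r)^N) := by
        rw [ENNReal.ofReal_mul hC, ENNReal.ofReal_mul (by positivity),
          ENNReal.ofReal_add zero_le_one (by positivity), ENNReal.ofReal_pow (by norm_num),
          ENNReal.ofReal_pow hr, ENNReal.ofReal_one, ENNReal.ofReal_ofNat]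
        ring

lemma lint_map_le {G : Type*} [NormedAddCommGroup G] {f : E d → G} (hf : Continuous f)
    {C : ℝ} {N : ℕ} (hC : 0 ≤ C) (hb : ∀ x, ‖f x‖ ≤ C * (1+‖x‖)^N)
    (ν : Measure ℝ) (hν : ν (Set.Iio 0) = 0) (θm : Measure (sphere (0:E d) 1))
    [SFinite ν] [SFinite θm] :
    ∫⁻ x, ‖f x‖₊ ∂(Measure.map (sphereMap d) (ν.prod θm))
      ≤ ENNReal.ofReal C * 2^N * ((ν Set.univ) + ∫⁻ r, (ENNReal.ofReal r)^N ∂ν)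
          * θm Set.univ := by
  rw [lintegral_map hf.nnnorm.measurable.coe_nnreal_ennreal (continuous_sphereMap).measurable]
  have h0 : ∀ᵐ p ∂(ν.prod θm), 0 ≤ p.1 := by
    rw [ae_iff]
    have hset : {p : ℝ × sphere (0:E d) 1 | ¬ 0 ≤ p.1} = (Set.Iio 0) ×ˢ Set.univ := by
      ext p; simp [not_le]
    rw [hset, Measure.prod_prod, hν, zero_mul]
  have hae : ∀ᵐ p ∂(ν.prod θm), (‖f (sphereMap d p)‖₊ : ℝ≥0∞)
      ≤ ENNReal.ofReal C * 2^N * (1 + (ENNReal.ofReal p.1)^N) := by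
    filter_upwards [h0] with p hp
    calc (‖f (sphereMap d p)‖₊ : ℝ≥0∞) = ENNReal.ofReal ‖f (sphereMap d p)‖ :=
          (ofReal_norm _).symm
      _ ≤ ENNReal.ofReal (C * (1+p.1)^N) := by
          apply ENNReal.ofReal_le_ofReal
          have := hb (sphereMap d p)
          rwa [norm_sphereMap, abs_of_nonneg hp] at this
      _ ≤ ENNReal.ofReal C * 2^N * (1 + (ENNReal.ofReal p.1)^N) := ennreal_pow_bound hC hp N
  calc ∫⁻ p, (‖f (sphereMap d p)‖₊ : ℝ≥0∞) ∂(ν.prod θm)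
      ≤ ∫⁻ p, ENNReal.ofReal C * 2^N * (1 + (ENNReal.ofReal p.1)^N) ∂(ν.prod θm) :=
        lintegral_mono_ae hae
    _ = ∫⁻ r, ∫⁻ _θ, ENNReal.ofReal C * 2^N * (1 + (ENNReal.ofReal r)^N) ∂θm ∂ν := by
        apply lintegral_prod
        exact (measurable_const.mul
          ((measurable_const.add ((ENNReal.measurable_ofReal.comp measurable_fst).pow_const N)))).aemeasurable
    _ = ∫⁻ r, (ENNReal.ofReal C * 2^N * (1 + (ENNReal.ofReal r)^N)) * θm Set.univ ∂ν := by
        congr 1; funext r; rw [lintegral_const]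
    _ = (∫⁻ r, ENNReal.ofReal C * 2^N * (1 + (ENNReal.ofReal r)^N) ∂ν) * θm Set.univ := by
        rw [lintegral_mul_const]
        exact measurable_const.mul
          (measurable_const.add ((ENNReal.measurable_ofReal).pow_const N))
    _ = ENNReal.ofReal C * 2^N * ((ν Set.univ) + ∫⁻ r, (ENNReal.ofReal r)^N ∂ν)
          * θm Set.univ := by
        congr 1
        rw [lintegral_const_mul _ (f := fun r : ℝ => 1 + ENNReal.ofReal r ^ N)
            (measurable_const.add ((ENNReal.measurable_ofReal).pow_const N)),
          lintegral_add_left measurable_const, lintegral_const, one_mul]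

variable (σ : (k : ℕ) → Fin (B.a k) → Measure ℝ)

lemma lint_sum_lt {G : Type*} [NormedAddCommGroup G] {f : E d → G} (hf : Continuous f)
    {C : ℝ} {N : ℕ} (hC : 0 ≤ C) (hb : ∀ x, ‖f x‖ ≤ C * (1+‖x‖)^N)
    (hpos : ∀ k l, (σ k l) (Set.Iio 0) = 0) (hsum : B.SummCond σ)
    (th : (k : ℕ) → Fin (B.a k) → Measure (sphere (0:E d) 1))
    (hth : ∀ k l, th k l Set.univ ≤ sphMeas d Set.univ + 1) :
    ∫⁻ x, ‖f x‖₊ ∂(Measure.sum fun i : (k : ℕ) × Fin (B.a k) =>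
      Measure.map (sphereMap d) ((nuM B σ i.1 i.2).prod (th i.1 i.2))) < ⊤ := by
  rw [lintegral_sum_measure]
  set Kc : ℝ≥0∞ := ENNReal.ofReal C * 2^N * (sphMeas d Set.univ + 1) with hKc
  have key : ∀ i : (k : ℕ) × Fin (B.a k),
      ∫⁻ x, (‖f x‖₊ : ℝ≥0∞) ∂(Measure.map (sphereMap d) ((nuM B σ i.1 i.2).prod (th i.1 i.2)))
        ≤ Kc * ((nuM B σ i.1 i.2 Set.univ) + ∫⁻ r, (ENNReal.ofReal r)^N ∂(nuM B σ i.1 i.2)) := by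
    intro i
    haveI := nu_fin B σ hsum i.1 i.2
    haveI : IsFiniteMeasure (th i.1 i.2) := ⟨lt_of_le_of_lt (hth i.1 i.2)
      (ENNReal.add_lt_top.mpr ⟨sphMeas_univ_lt, ENNReal.one_lt_top⟩)⟩
    refine le_trans (lint_map_le hf hC hb _ (nu_Iio B σ hpos i.1 i.2) _) ?_
    calc ENNReal.ofReal C * 2^N
          * ((nuM B σ i.1 i.2 Set.univ) + ∫⁻ r, (ENNReal.ofReal r)^N ∂(nuM B σ i.1 i.2))
          * (th i.1 i.2 Set.univ)
        ≤ ENNReal.ofReal C * 2^N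
          * ((nuM B σ i.1 i.2 Set.univ) + ∫⁻ r, (ENNReal.ofReal r)^N ∂(nuM B σ i.1 i.2))
          * (sphMeas d Set.univ + 1) := mul_le_mul_right (hth i.1 i.2) _
      _ = Kc * ((nuM B σ i.1 i.2 Set.univ) + ∫⁻ r, (ENNReal.ofReal r)^N ∂(nuM B σ i.1 i.2)) := by
          rw [hKc]; ring
  refine lt_of_le_of_lt (ENNReal.tsum_le_tsum key) ?_
  rw [ENNReal.tsum_mul_left]
  have hKlt : Kc < ⊤ := by
    rw [hKc]
    refine ENNReal.mul_lt_top (ENNReal.mul_lt_top ENNReal.ofReal_lt_top ?_) ?_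
    · exact ENNReal.pow_lt_top ENNReal.ofNat_lt_top
    · exact ENNReal.add_lt_top.mpr ⟨sphMeas_univ_lt, ENNReal.one_lt_top⟩
  have hsums : (∑' i : (k : ℕ) × Fin (B.a k),
      ((nuM B σ i.1 i.2 Set.univ) + ∫⁻ r, (ENNReal.ofReal r)^N ∂(nuM B σ i.1 i.2))) < ⊤ := by
    rw [ENNReal.tsum_add]
    refine ENNReal.add_lt_top.mpr ⟨?_, hsum_lt B σ hsum N⟩
    have h1 : ∀ i : (k : ℕ) × Fin (B.a k), nuM B σ i.1 i.2 Set.univ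
        = ∫⁻ r, (ENNReal.ofReal r)^0 ∂(nuM B σ i.1 i.2) := fun i => nu_univ_eq B σ i.1 i.2
    rw [tsum_congr h1]
    exact hsum_lt B σ hsum 0
  exact ENNReal.mul_lt_top hKlt hsums

lemma integrable_mup {G : Type*} [NormedAddCommGroup G] {f : E d → G} (hf : Continuous f)
    {C : ℝ} {N : ℕ} (hC : 0 ≤ C) (hb : ∀ x, ‖f x‖ ≤ C * (1+‖x‖)^N)
    (hpos : ∀ k l, (σ k l) (Set.Iio 0) = 0) (hsum : B.SummCond σ) :
    Integrable f (mup B σ) :=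
  ⟨hf.aestronglyMeasurable, lint_sum_lt B σ hf hC hb hpos hsum (thp B) (thp_univ_le B)⟩

lemma integrable_mun {G : Type*} [NormedAddCommGroup G] {f : E d → G} (hf : Continuous f)
    {C : ℝ} {N : ℕ} (hC : 0 ≤ C) (hb : ∀ x, ‖f x‖ ≤ C * (1+‖x‖)^N)
    (hpos : ∀ k l, (σ k l) (Set.Iio 0) = 0) (hsum : B.SummCond σ) :
    Integrable f (mun B σ) :=
  ⟨hf.aestronglyMeasurable, lint_sum_lt B σ hf hC hb hpos hsum (thn B) (thn_univ_le B)⟩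

lemma mup_fin (hpos : ∀ k l, (σ k l) (Set.Iio 0) = 0) (hsum : B.SummCond σ) :
    IsFiniteMeasure (mup B σ) := by
  constructor
  have h := (integrable_mup B σ (f := fun _ : E d => (1:ℝ)) continuous_const
    (C := 1) (N := 0) zero_le_one (fun x => by simp) hpos hsum)
  have h2 := h.2
  rw [hasFiniteIntegral_def] at h2
  simpa using h2

lemma mun_fin (hpos : ∀ k l, (σ k l) (Set.Iio 0) = 0) (hsum : B.SummCond σ) :
    IsFiniteMeasure (mun B σ) := by
  constructor
  have h := (integrable_mun B σ (f := fun _ : E d => (1:ℝ)) continuous_const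
    (C := 1) (N := 0) zero_le_one (fun x => by simp) hpos hsum)
  have h2 := h.2
  rw [hasFiniteIntegral_def] at h2
  simpa using h2

end Bound

section Master
variable {d : ℕ} (B : HarmonicBasis d)

lemma toNNReal_smul_sub {G : Type*} [NormedAddCommGroup G] [NormedSpace ℝ G]
    (y : ℝ) (g : G) : y.toNNReal • g - (-y).toNNReal • g = y • g := by
  rw [NNReal.smul_def, NNReal.smul_def, ← sub_smul, Real.coe_toNNReal', Real.coe_toNNReal']
  congr 1
  rcases le_total y 0 with h | h
  · rw [max_eq_right h, max_eq_left (by linarith)]; ring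
  · rw [max_eq_left h, max_eq_right (by linarith)]; ring

lemma sphere_int_split {G : Type*} [NormedAddCommGroup G] [NormedSpace ℝ G]
    [CompleteSpace G] (k : ℕ) (l : Fin (B.a k))
    (g : sphere (0:E d) 1 → G) (hg : Continuous g) :
    (∫ θ, g θ ∂(thp B k l)) - (∫ θ, g θ ∂(thn B k l))
      = ∫ θ, (B.Yf k l (θ:E d)) • g θ ∂(sphMeas d) := by
  have hYp : Measurable fun θ : sphere (0:E d) 1 => (B.Yf k l (θ:E d)).toNNReal :=
    (continuous_real_toNNReal.comp (continuous_YfS B k l)).measurable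
  have hYn : Measurable fun θ : sphere (0:E d) 1 => (- B.Yf k l (θ:E d)).toNNReal :=
    (continuous_real_toNNReal.comp (continuous_YfS B k l).neg).measurable
  have h1 : ∫ θ, g θ ∂(thp B k l)
      = ∫ θ, (B.Yf k l (θ:E d)).toNNReal • g θ ∂(sphMeas d) := by
    rw [thp]
    exact integral_withDensity_eq_integral_smul hYp g
  have h2 : ∫ θ, g θ ∂(thn B k l)
      = ∫ θ, (- B.Yf k l (θ:E d)).toNNReal • g θ ∂(sphMeas d) := by
    rw [thn]
    exact integral_withDensity_eq_integral_smul hYn g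
  rw [h1, h2, ← integral_sub]
  · apply integral_congr_ae
    apply Filter.Eventually.of_forall
    intro θ
    exact toNNReal_smul_sub _ _
  · exact integrable_sphere _
      ((continuous_real_toNNReal.comp (continuous_YfS B k l)).smul hg)
  · exact integrable_sphere _
      ((continuous_real_toNNReal.comp (continuous_YfS B k l).neg).smul hg)

variable (σ : (k : ℕ) → Fin (B.a k) → Measure ℝ)

lemma master {G : Type*} [NormedAddCommGroup G] [NormedSpace ℝ G] [CompleteSpace G]
    {f : E d → G} (hf : Continuous f) {C : ℝ} {N : ℕ}
    (hC : 0 ≤ C) (hb : ∀ x, ‖f x‖ ≤ C * (1+‖x‖)^N)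
    (hpos : ∀ k l, (σ k l) (Set.Iio 0) = 0) (hsum : B.SummCond σ) :
    (∫ x, f x ∂(mup B σ)) - ∫ x, f x ∂(mun B σ)
      = ∑' i : (k : ℕ) × Fin (B.a k),
          ∫ r, (∫ θ, (B.Yf i.1 i.2 (θ:E d)) • f (r • (θ:E d)) ∂(sphMeas d))
            ∂(nuM B σ i.1 i.2) := by
  have hip : Integrable f (mup B σ) := integrable_mup B σ hf hC hb hpos hsum
  have hin : Integrable f (mun B σ) := integrable_mun B σ hf hC hb hpos hsum
  have hsp : HasSum (fun i : (k : ℕ) × Fin (B.a k) =>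
      ∫ x, f x ∂(Measure.map (sphereMap d) ((nuM B σ i.1 i.2).prod (thp B i.1 i.2))))
      (∫ x, f x ∂(mup B σ)) := by
    rw [mup] at hip ⊢
    exact hasSum_integral_measure hip
  have hsn : HasSum (fun i : (k : ℕ) × Fin (B.a k) =>
      ∫ x, f x ∂(Measure.map (sphereMap d) ((nuM B σ i.1 i.2).prod (thn B i.1 i.2))))
      (∫ x, f x ∂(mun B σ)) := by
    rw [mun] at hin ⊢
    exact hasSum_integral_measure hin
  rw [← hsp.tsum_eq, ← hsn.tsum_eq, ← Summable.tsum_sub hsp.summable hsn.summable]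
  apply tsum_congr
  intro i
  haveI := nu_fin B σ hsum i.1 i.2
  haveI := thp_fin B i.1 i.2
  haveI := thn_fin B i.1 i.2
  have hfp : Integrable f (Measure.map (sphereMap d) ((nuM B σ i.1 i.2).prod (thp B i.1 i.2))) := by
    rw [mup] at hip
    exact hip.mono_measure (Measure.le_sum _ i)
  have hfn : Integrable f (Measure.map (sphereMap d) ((nuM B σ i.1 i.2).prod (thn B i.1 i.2))) := by
    rw [mun] at hin
    exact hin.mono_measure (Measure.le_sum _ i)
  have hcp : Integrable (fun p : ℝ × sphere (0:E d) 1 => f (sphereMap d p))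
      ((nuM B σ i.1 i.2).prod (thp B i.1 i.2)) :=
    (integrable_map_measure hf.aestronglyMeasurable (continuous_sphereMap).measurable.aemeasurable).mp hfp
  have hcn : Integrable (fun p : ℝ × sphere (0:E d) 1 => f (sphereMap d p))
      ((nuM B σ i.1 i.2).prod (thn B i.1 i.2)) :=
    (integrable_map_measure hf.aestronglyMeasurable (continuous_sphereMap).measurable.aemeasurable).mp hfn
  have e1 : ∫ x, f x ∂(Measure.map (sphereMap d) ((nuM B σ i.1 i.2).prod (thp B i.1 i.2)))
      = ∫ r, ∫ θ, f (sphereMap d (r, θ)) ∂(thp B i.1 i.2) ∂(nuM B σ i.1 i.2) := by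
    rw [integral_map (continuous_sphereMap).measurable.aemeasurable hf.aestronglyMeasurable]
    exact integral_prod _ hcp
  have e2 : ∫ x, f x ∂(Measure.map (sphereMap d) ((nuM B σ i.1 i.2).prod (thn B i.1 i.2)))
      = ∫ r, ∫ θ, f (sphereMap d (r, θ)) ∂(thn B i.1 i.2) ∂(nuM B σ i.1 i.2) := by
    rw [integral_map (continuous_sphereMap).measurable.aemeasurable hf.aestronglyMeasurable]
    exact integral_prod _ hcn
  rw [e1, e2, ← integral_sub (hcp.integral_prod_left) (hcn.integral_prod_left)]
  apply integral_congr_ae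
  apply Filter.Eventually.of_forall
  intro r
  exact sphere_int_split B i.1 i.2 _ (hf.comp (continuous_subtype_val.const_smul r))

end Master

section Apps
variable {d : ℕ} (B : HarmonicBasis d)

lemma evalC_YC (k : ℕ) (l : Fin (B.a k)) (x : E d) :
    evalC (B.YC k l) x = ((B.Yf k l x : ℝ) : ℂ) := by
  unfold evalC HarmonicBasis.YC HarmonicBasis.Yf
  rw [eval_map]
  rw [show ((eval (fun i => x i) (B.Y k l) : ℝ) : ℂ)
      = algebraMap ℝ ℂ (eval₂ (RingHom.id ℝ) (fun i => x i) (B.Y k l)) from rfl]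
  rw [eval₂_comp_left (algebraMap ℝ ℂ) (RingHom.id ℝ) (fun i => x i) (B.Y k l), RingHom.comp_id]
  rfl

lemma Yf_bound (k : ℕ) (l : Fin (B.a k)) :
    ∃ (C : ℝ) (N : ℕ), 0 ≤ C ∧ ∀ x : E d, |B.Yf k l x| ≤ C * (1 + ‖x‖) ^ N := by
  obtain ⟨C, N, hC, h⟩ := poly_bound (B.YC k l)
  exact ⟨C, N, hC, fun x => by
    have := h x
    rwa [evalC_YC, Complex.norm_real, Real.norm_eq_abs] at this⟩

lemma sphere_norm_one (θ : sphere (0:E d) 1) : ‖(θ : E d)‖ = 1 := by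
  have h2 := θ.2
  rw [mem_sphere_iff_norm, sub_zero] at h2
  exact h2

lemma norm_smul_sphere (r : ℝ) (θ : sphere (0:E d) 1) : ‖r • (θ:E d)‖ = |r| := by
  rw [norm_smul, sphere_norm_one, mul_one, Real.norm_eq_abs]

lemma inner_pseudo (k : ℕ) (l : Fin (B.a k)) (k' : ℕ) (l' : Fin (B.a k'))
    (h : ℝ → ℝ) (r : ℝ) :
    ∫ θ : sphere (0:E d) 1,
        (B.Yf k' l' (θ:E d)) • (h ‖r • (θ:E d)‖ * B.Yf k l (r • (θ:E d))) ∂(sphMeas d)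
      = if k' = k ∧ (l' : ℕ) = (l : ℕ) then h |r| * r^k else 0 := by
  have hpt : (fun θ : sphere (0:E d) 1 =>
      (B.Yf k' l' (θ:E d)) • (h ‖r • (θ:E d)‖ * B.Yf k l (r • (θ:E d))))
      = fun θ : sphere (0:E d) 1 =>
        (h |r| * r^k) * (B.Yf k' l' (θ:E d) * B.Yf k l (θ:E d)) := by
    funext θ
    rw [norm_smul_sphere, Yf_smul, smul_eq_mul]
    ring
  rw [hpt, integral_const_mul, ortho B k' k l' l]
  rcases Decidable.em (k' = k ∧ (l' : ℕ) = (l : ℕ)) with hc | hc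
  · rw [if_pos hc, if_pos hc, mul_one]
  · rw [if_neg hc, if_neg hc, mul_zero]

lemma sigma_eq_iff (k : ℕ) (l : Fin (B.a k)) (i : (k : ℕ) × Fin (B.a k)) :
    (i.1 = k ∧ (i.2 : ℕ) = (l : ℕ)) ↔ i = ⟨k, l⟩ := by
  constructor
  · rcases i with ⟨k', l'⟩
    rintro ⟨rfl, h2⟩
    exact congrArg (Sigma.mk k') (Fin.ext h2)
  · rintro rfl
    exact ⟨rfl, rfl⟩

variable (σ : (k : ℕ) → Fin (B.a k) → Measure ℝ)

lemma nuM_ae_nonneg (hpos : ∀ k l, (σ k l) (Set.Iio 0) = 0) (k : ℕ) (l : Fin (B.a k)) :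
    ∀ᵐ r ∂(nuM B σ k l), 0 ≤ r := by
  rw [ae_iff]
  have hset : {r : ℝ | ¬ 0 ≤ r} = Set.Iio 0 := by ext r; simp [not_le]
  rw [hset]
  exact nu_Iio B σ hpos k l

lemma pseudo_pos_component (hpos : ∀ k l, (σ k l) (Set.Iio 0) = 0)
    (k : ℕ) (l : Fin (B.a k)) (h : ℝ → ℝ) (hh : ∀ t, 0 ≤ h t) :
    0 ≤ ∫ r, h |r| * r^k ∂(nuM B σ k l) := by
  apply integral_nonneg_of_ae
  filter_upwards [nuM_ae_nonneg B σ hpos k l] with r hr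
  exact mul_nonneg (hh _) (pow_nonneg hr _)

end Apps

section Apps2
open scoped NNReal
variable {d : ℕ} (B : HarmonicBasis d) (σ : (k : ℕ) → Fin (B.a k) → Measure ℝ)

lemma sigma_Dk_lt (hsum : B.SummCond σ) (k : ℕ) (l : Fin (B.a k)) :
    ∫⁻ r, Dk k r ∂(σ k l) < ⊤ := by
  have h0 := hsum 0
  have h2 : ∫⁻ r, Dk k r ∂(σ k l)
      = ∫⁻ r, (ENNReal.ofReal r)^0 * ((ENNReal.ofReal r)^k)⁻¹ ∂(σ k l) := by
    simp [Dk]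
  have h1 : ∫⁻ r, Dk k r ∂(σ k l)
      ≤ ∑ l', ∫⁻ r, (ENNReal.ofReal r)^0 * ((ENNReal.ofReal r)^k)⁻¹ ∂(σ k l') := by
    rw [h2]
    exact Finset.single_le_sum
      (f := fun l' => ∫⁻ r, (ENNReal.ofReal r)^0 * ((ENNReal.ofReal r)^k)⁻¹ ∂(σ k l'))
      (fun _ _ => zero_le) (Finset.mem_univ l)
  exact lt_of_le_of_lt (h1.trans (ENNReal.le_tsum k)) h0

lemma nu_integral (hpos : ∀ k l, (σ k l) (Set.Iio 0) = 0) (hsum : B.SummCond σ)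
    (k : ℕ) (l : Fin (B.a k)) (q : Polynomial ℂ) :
    ∫ r, q.eval ((r:ℂ)^2) * (r:ℂ)^k ∂(nuM B σ k l) = ∫ r, q.eval ((r:ℂ)^2) ∂(σ k l) := by
  set w : ℝ → ℝ≥0 := fun r => (Dk k r).toNNReal with hw
  have hwmeas : Measurable w := (measurable_Dk k).ennreal_toNNReal
  have hae : (Dk k) =ᵐ[σ k l] fun r => ((w r : ℝ≥0) : ℝ≥0∞) := by
    filter_upwards [ae_lt_top (measurable_Dk k) (sigma_Dk_lt B σ hsum k l).ne] with r hr
    rw [hw]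
    simp [ENNReal.coe_toNNReal hr.ne]
  have h1 : nuM B σ k l = (σ k l).withDensity fun r => ((w r : ℝ≥0) : ℝ≥0∞) := by
    rw [nuM]; exact withDensity_congr_ae hae
  rw [h1, integral_withDensity_eq_integral_smul hwmeas]
  apply integral_congr_ae
  have hpos' : ∀ᵐ r ∂(σ k l), 0 ≤ r := by
    rw [ae_iff]
    have hset : {r : ℝ | ¬ 0 ≤ r} = Set.Iio 0 := by ext r; simp [not_le]
    rw [hset]; exact hpos k l
  filter_upwards [hpos', ae_lt_top (measurable_Dk k) (sigma_Dk_lt B σ hsum k l).ne]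
    with r hr hfin
  rcases eq_or_lt_of_le hr with heq | hlt
  · have hk : k = 0 := by
      by_contra hk
      rw [← heq] at hfin
      simp [Dk, ENNReal.ofReal_zero, zero_pow hk] at hfin
    subst hk
    rw [← heq]
    have hw0 : w 0 = 1 := by simp [hw, Dk]
    rw [hw0]
    simp
  · have hr0 : r ≠ 0 := ne_of_gt hlt
    have hwr : ((w r : ℝ≥0) : ℝ) = (r^k)⁻¹ := by
      rw [hw]
      have : ((Dk k r).toNNReal : ℝ) = (Dk k r).toReal := rfl
      rw [this, Dk, ENNReal.toReal_inv, ENNReal.toReal_pow, ENNReal.toReal_ofReal hr]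
    rw [NNReal.smul_def, hwr, Complex.real_smul]
    have hck : ((r:ℂ))^k ≠ 0 := pow_ne_zero _ (by exact_mod_cast hr0)
    push_cast
    field_simp

lemma inner_term (i j : (k : ℕ) × Fin (B.a k)) (q : Polynomial ℂ) (r : ℝ) :
    ∫ θ : sphere (0:E d) 1,
        (B.Yf i.1 i.2 (θ:E d)) •
          evalC (Polynomial.aeval (normSqP d) q * B.YC j.1 j.2) (r • (θ:E d)) ∂(sphMeas d)
      = if i = j then q.eval ((r:ℂ)^2) * (r:ℂ)^j.1 else 0 := by
  have hpt : (fun θ : sphere (0:E d) 1 =>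
      (B.Yf i.1 i.2 (θ:E d)) •
        evalC (Polynomial.aeval (normSqP d) q * B.YC j.1 j.2) (r • (θ:E d)))
      = fun θ : sphere (0:E d) 1 =>
        (q.eval ((r:ℂ)^2) * (r:ℂ)^j.1) *
          (((B.Yf i.1 i.2 (θ:E d) * B.Yf j.1 j.2 (θ:E d) : ℝ)) : ℂ) := by
    funext θ
    have hmul : evalC (Polynomial.aeval (normSqP d) q * B.YC j.1 j.2) (r • (θ:E d))
        = evalC (Polynomial.aeval (normSqP d) q) (r • (θ:E d))
            * evalC (B.YC j.1 j.2) (r • (θ:E d)) := by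
      unfold evalC; rw [map_mul]
    rw [hmul, evalC_aeval, evalC_normSqP, evalC_YC, norm_smul_sphere, sq_abs, Yf_smul]
    rw [Complex.real_smul]
    push_cast
    ring
  rw [hpt, integral_const_mul]
  have hoi : (∫ θ : sphere (0:E d) 1,
      ((B.Yf i.1 i.2 (θ:E d) * B.Yf j.1 j.2 (θ:E d) : ℝ) : ℂ) ∂(sphMeas d))
      = if i = j then (1:ℂ) else 0 := by
    have h2 : (∫ θ : sphere (0:E d) 1,
        ((B.Yf i.1 i.2 (θ:E d) * B.Yf j.1 j.2 (θ:E d) : ℝ) : ℂ) ∂(sphMeas d))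
        = (((∫ θ : sphere (0:E d) 1,
            B.Yf i.1 i.2 (θ:E d) * B.Yf j.1 j.2 (θ:E d) ∂(sphMeas d)) : ℝ) : ℂ) := by
      exact integral_ofReal (𝕜 := ℂ)
    rw [h2, ortho B i.1 j.1 i.2 j.2]
    by_cases hc : i = j
    · subst hc
      rw [if_pos ⟨rfl, rfl⟩, if_pos rfl]
      norm_num
    · have hcond : ¬ (i.1 = j.1 ∧ (i.2:ℕ) = (j.2:ℕ)) := fun hcond =>
        hc (((sigma_eq_iff B j.1 j.2 i).mp hcond).trans (Sigma.eta j))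
      rw [if_neg hcond, if_neg hc]
      norm_num
  rw [hoi, mul_ite, mul_one, mul_zero]

lemma inner_identity (K : ℕ) (p : (k : ℕ) → Fin (B.a k) → Polynomial ℂ)
    (i : (k : ℕ) × Fin (B.a k)) (r : ℝ) :
    ∫ θ : sphere (0:E d) 1,
        (B.Yf i.1 i.2 (θ:E d)) • evalC (∑ k ∈ Finset.range (K + 1), ∑ l,
          Polynomial.aeval (normSqP d) (p k l) * B.YC k l) (r • (θ:E d)) ∂(sphMeas d)
      = if i.1 ∈ Finset.range (K+1)
          then (p i.1 i.2).eval ((r:ℂ)^2) * (r:ℂ)^i.1 else 0 := by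
  set S : Finset ((k : ℕ) × Fin (B.a k)) :=
    (Finset.range (K+1)).sigma (fun _ => Finset.univ) with hS
  have hF : (∑ k ∈ Finset.range (K + 1), ∑ l,
      Polynomial.aeval (normSqP d) (p k l) * B.YC k l)
      = ∑ j ∈ S, Polynomial.aeval (normSqP d) (p j.1 j.2) * B.YC j.1 j.2 := by
    rw [hS, Finset.sum_sigma]
  rw [hF]
  have hsplit : (fun θ : sphere (0:E d) 1 =>
      (B.Yf i.1 i.2 (θ:E d)) • evalC (∑ j ∈ S,
        Polynomial.aeval (normSqP d) (p j.1 j.2) * B.YC j.1 j.2) (r • (θ:E d)))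
      = fun θ : sphere (0:E d) 1 => ∑ j ∈ S, (B.Yf i.1 i.2 (θ:E d)) •
          evalC (Polynomial.aeval (normSqP d) (p j.1 j.2) * B.YC j.1 j.2) (r • (θ:E d)) := by
    funext θ
    have hsum : evalC (∑ j ∈ S, Polynomial.aeval (normSqP d) (p j.1 j.2) * B.YC j.1 j.2)
        (r • (θ:E d)) = ∑ j ∈ S,
          evalC (Polynomial.aeval (normSqP d) (p j.1 j.2) * B.YC j.1 j.2) (r • (θ:E d)) := by
      unfold evalC; rw [map_sum]
    rw [hsum, Finset.smul_sum]
  rw [hsplit, integral_finset_sum]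
  · have hterm : ∀ j ∈ S, (∫ θ : sphere (0:E d) 1, (B.Yf i.1 i.2 (θ:E d)) •
        evalC (Polynomial.aeval (normSqP d) (p j.1 j.2) * B.YC j.1 j.2)
          (r • (θ:E d)) ∂(sphMeas d))
        = if i = j then (p j.1 j.2).eval ((r:ℂ)^2) * (r:ℂ)^j.1 else 0 := fun j _ =>
      inner_term B i j (p j.1 j.2) r
    rw [Finset.sum_congr rfl hterm, Finset.sum_ite_eq S i
      (fun j => (p j.1 j.2).eval ((r:ℂ)^2) * (r:ℂ)^j.1)]
    have hmem : i ∈ S ↔ i.1 ∈ Finset.range (K+1) := by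
      rw [hS, Finset.mem_sigma]
      simp
    rcases Decidable.em (i.1 ∈ Finset.range (K+1)) with hc | hc
    · rw [if_pos (hmem.mpr hc), if_pos hc]
    · rw [if_neg (fun hmem' => hc (hmem.mp hmem')), if_neg hc]
  · intro j _
    apply integrable_sphere
    exact (continuous_YfS B i.1 i.2).smul
      ((continuous_evalC _).comp (continuous_subtype_val.const_smul r))

end Apps2

end Aux
theorem statement4 {d : ℕ} (hd : 1 ≤ d) (B : HarmonicBasis d)
    (σ : (k : ℕ) → Fin (B.a k) → Measure ℝ)
    (hpos : ∀ k l, (σ k l) (Set.Iio 0) = 0)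
    (hsum : B.SummCond σ) :
    ∃ μ : SignedMeasure (E d), B.PseudoPositive μ ∧ IsMomentMeasure μ ∧
      ∀ (f : MvPolynomial (Fin d) ℂ) (K : ℕ) (p : (k : ℕ) → Fin (B.a k) → Polynomial ℂ),
        B.GaussDecomp f K p →
        (∑ k ∈ Finset.range (K + 1), ∑ l, ∫ r, (p k l).eval ((r : ℂ) ^ 2) ∂(σ k l))
          = sInt μ (evalC f) := by
  haveI hfp : IsFiniteMeasure (mup B σ) := mup_fin B σ hpos hsum
  haveI hfn : IsFiniteMeasure (mun B σ) := mun_fin B σ hpos hsum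
  refine ⟨(mup B σ).toSignedMeasure - (mun B σ).toSignedMeasure, ?_, ?_, ?_⟩
  · -- PseudoPositive
    intro k l h hc hcs hh
    obtain ⟨Ch, hCh⟩ := hcs.exists_bound_of_continuous hc
    obtain ⟨Cy, Ny, hCy, hYb⟩ := Yf_bound B k l
    have hCh0 : 0 ≤ Ch := le_trans (norm_nonneg _) (hCh 0)
    have hfc : Continuous (fun x : E d => h ‖x‖ * B.Yf k l x) :=
      (hc.comp continuous_norm).mul (continuous_Yf B k l)
    have hCC : 0 ≤ Ch * Cy := mul_nonneg hCh0 hCy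
    have hfb : ∀ x : E d, ‖h ‖x‖ * B.Yf k l x‖ ≤ (Ch * Cy) * (1+‖x‖)^Ny := by
      intro x
      rw [Real.norm_eq_abs, abs_mul, mul_assoc]
      have h5 := hCh ‖x‖
      rw [Real.norm_eq_abs] at h5
      exact mul_le_mul h5 (hYb x) (abs_nonneg _) hCh0
    rw [sInt_eq _ _ _ (integrable_mup B σ hfc hCC hfb hpos hsum)
      (integrable_mun B σ hfc hCC hfb hpos hsum),
      master B σ hfc hCC hfb hpos hsum]
    have h2 : ∀ i : (k' : ℕ) × Fin (B.a k'),
        (∫ r, (∫ θ : sphere (0:E d) 1, (B.Yf i.1 i.2 (θ:E d)) •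
            (h ‖r • (θ:E d)‖ * B.Yf k l (r • (θ:E d))) ∂(sphMeas d)) ∂(nuM B σ i.1 i.2))
        = if i = (⟨k, l⟩ : (k' : ℕ) × Fin (B.a k'))
            then ∫ r, h |r| * r^k ∂(nuM B σ k l) else 0 := by
      intro i
      have h3 : ∀ r : ℝ, (∫ θ : sphere (0:E d) 1, (B.Yf i.1 i.2 (θ:E d)) •
          (h ‖r • (θ:E d)‖ * B.Yf k l (r • (θ:E d))) ∂(sphMeas d))
          = if i.1 = k ∧ (i.2 : ℕ) = (l : ℕ) then h |r| * r^k else 0 := fun r =>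
        inner_pseudo B k l i.1 i.2 h r
      by_cases hc2 : i = ⟨k, l⟩
      · rw [if_pos hc2]
        have hcond : i.1 = k ∧ (i.2 : ℕ) = (l : ℕ) := (sigma_eq_iff B k l i).mpr hc2
        have h4 : ∀ r : ℝ, (∫ θ : sphere (0:E d) 1, (B.Yf i.1 i.2 (θ:E d)) •
            (h ‖r • (θ:E d)‖ * B.Yf k l (r • (θ:E d))) ∂(sphMeas d)) = h |r| * r^k := by
          intro r; rw [h3 r, if_pos hcond]
        rw [integral_congr_ae (Filter.Eventually.of_forall h4)]
        subst hc2
        rfl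
      · rw [if_neg hc2]
        have hcond : ¬ (i.1 = k ∧ (i.2 : ℕ) = (l : ℕ)) := fun hcond =>
          hc2 ((sigma_eq_iff B k l i).mp hcond)
        have h4 : ∀ r : ℝ, (∫ θ : sphere (0:E d) 1, (B.Yf i.1 i.2 (θ:E d)) •
            (h ‖r • (θ:E d)‖ * B.Yf k l (r • (θ:E d))) ∂(sphMeas d)) = 0 := by
          intro r; rw [h3 r, if_neg hcond]
        rw [integral_congr_ae (Filter.Eventually.of_forall h4)]
        exact integral_zero _ _
    rw [tsum_congr h2, tsum_eq_single (⟨k, l⟩ : (k' : ℕ) × Fin (B.a k'))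
      (fun b hb => if_neg hb), if_pos rfl]
    exact pseudo_pos_component B σ hpos k l h hh
  · -- IsMomentMeasure
    intro P
    obtain ⟨C, N, hC, hb⟩ := poly_bound P
    have h1 : Integrable (evalC P) ((mup B σ) + (mun B σ)) :=
      (integrable_mup B σ (continuous_evalC P) hC hb hpos hsum).add_measure
        (integrable_mun B σ (continuous_evalC P) hC hb hpos hsum)
    exact h1.mono_measure (totalVariation_le _ _)
  · -- the representation identity
    intro f K p hgd
    obtain ⟨hzero, hrep⟩ := hgd
    obtain ⟨C, N, hC, hb⟩ := poly_bound f
    rw [sInt_eq _ _ _ (integrable_mup B σ (continuous_evalC f) hC hb hpos hsum)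
      (integrable_mun B σ (continuous_evalC f) hC hb hpos hsum),
      master B σ (continuous_evalC f) hC hb hpos hsum]
    have h2 : ∀ i : (k : ℕ) × Fin (B.a k),
        (∫ r, (∫ θ : sphere (0:E d) 1, (B.Yf i.1 i.2 (θ:E d)) •
            evalC f (r • (θ:E d)) ∂(sphMeas d)) ∂(nuM B σ i.1 i.2))
        = if i.1 ∈ Finset.range (K+1)
            then ∫ r, (p i.1 i.2).eval ((r:ℂ)^2) ∂(σ i.1 i.2) else 0 := by
      intro i
      have h3 : ∀ r : ℝ, (∫ θ : sphere (0:E d) 1, (B.Yf i.1 i.2 (θ:E d)) •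
          evalC f (r • (θ:E d)) ∂(sphMeas d))
          = if i.1 ∈ Finset.range (K+1)
              then (p i.1 i.2).eval ((r:ℂ)^2) * (r:ℂ)^i.1 else 0 := by
        intro r
        rw [hrep]
        exact inner_identity B K p i r
      by_cases hc2 : i.1 ∈ Finset.range (K+1)
      · rw [if_pos hc2]
        have h4 : ∀ r : ℝ, (∫ θ : sphere (0:E d) 1, (B.Yf i.1 i.2 (θ:E d)) •
            evalC f (r • (θ:E d)) ∂(sphMeas d))
            = (p i.1 i.2).eval ((r:ℂ)^2) * (r:ℂ)^i.1 := by
          intro r; rw [h3 r, if_pos hc2]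
        rw [integral_congr_ae (Filter.Eventually.of_forall h4)]
        exact nu_integral B σ hpos hsum i.1 i.2 (p i.1 i.2)
      · rw [if_neg hc2]
        have h4 : ∀ r : ℝ, (∫ θ : sphere (0:E d) 1, (B.Yf i.1 i.2 (θ:E d)) •
            evalC f (r • (θ:E d)) ∂(sphMeas d)) = 0 := by
          intro r; rw [h3 r, if_neg hc2]
        rw [integral_congr_ae (Filter.Eventually.of_forall h4)]
        exact integral_zero _ _
    rw [tsum_congr h2]
    set S : Finset ((k : ℕ) × Fin (B.a k)) :=
      (Finset.range (K+1)).sigma (fun _ => Finset.univ) with hS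
    have h5 : ∀ i ∉ S, (if i.1 ∈ Finset.range (K+1)
        then ∫ r, (p i.1 i.2).eval ((r:ℂ)^2) ∂(σ i.1 i.2) else 0) = 0 := by
      intro i hi
      rw [if_neg]
      intro hmem
      exact hi (Finset.mem_sigma.mpr ⟨hmem, Finset.mem_univ _⟩)
    rw [tsum_eq_sum h5]
    have h6 : ∀ i ∈ S, (if i.1 ∈ Finset.range (K+1)
        then ∫ r, (p i.1 i.2).eval ((r:ℂ)^2) ∂(σ i.1 i.2) else 0)
        = ∫ r, (p i.1 i.2).eval ((r:ℂ)^2) ∂(σ i.1 i.2) := by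
      intro i hi
      rw [if_pos (Finset.mem_sigma.mp hi).1]
    rw [Finset.sum_congr rfl h6, hS, Finset.sum_sigma]
end
end

section
/- Let 0 < a < b and let σ be a non-zero non-negative finite measure on the interval [a,b]. Then the functional T : ℂ[x] → ℂ defined by T(f) = ∫_a^b f(x) dσ(x) − ∫_a^b f(−x) dσ(x) is pseudo-positive definite (for d = 1) but not positive definite, i.e. there exists a polynomial p ∈ ℂ[x] with T(p*·p) < 0. -/
open MeasureTheory Polynomial
open scoped ComplexOrder

noncomputable section

lemma eval_map_conj' (p : Polynomial ℂ) (x : ℝ) :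
    (p.map (starRingEnd ℂ)).eval (x : ℂ) = starRingEnd ℂ (p.eval (x : ℂ)) := by
  rw [eval_map]
  conv_lhs => rw [show ((x:ℂ)) = starRingEnd ℂ (x:ℂ) from (Complex.conj_ofReal x).symm]
  exact eval₂_at_apply _ _

theorem statement17 (a b : ℝ) (ha : 0 < a) (hab : a < b)
    (σ : Measure ℝ) [IsFiniteMeasure σ] (hsupp : σ ((Set.Icc a b)ᶜ) = 0) (hσ : σ ≠ 0)
    (T : Polynomial ℂ → ℂ)
    (hT : ∀ f : Polynomial ℂ,
      T f = (∫ x : ℝ, f.eval (x : ℂ) ∂σ) - ∫ x : ℝ, f.eval (-(x : ℂ)) ∂σ) :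
    (∀ (k : Fin 2) (p : Polynomial ℂ),
        0 ≤ T ((p.map (starRingEnd ℂ) * p).comp (Polynomial.X ^ 2) * Polynomial.X ^ (k : ℕ)) ∧
        0 ≤ T ((Polynomial.X * (p.map (starRingEnd ℂ) * p)).comp (Polynomial.X ^ 2) *
              Polynomial.X ^ (k : ℕ))) ∧
    ∃ p : Polynomial ℂ, T (p.map (starRingEnd ℂ) * p) < 0 := by
  have hmem : ∀ᵐ x ∂σ, x ∈ Set.Icc a b := by
    rw [ae_iff]
    exact hsupp
  have hrestrict : σ.restrict (Set.Icc a b) = σ :=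
    Measure.restrict_eq_self_of_ae_mem hmem
  have hintC : ∀ g : ℝ → ℂ, Continuous g → Integrable g σ := by
    intro g hg
    rw [← hrestrict]
    exact hg.continuousOn.integrableOn_compact isCompact_Icc
  have hintR : ∀ g : ℝ → ℝ, Continuous g → Integrable g σ := by
    intro g hg
    rw [← hrestrict]
    exact hg.continuousOn.integrableOn_compact isCompact_Icc
  have hint : ∀ f : Polynomial ℂ, Integrable (fun x : ℝ => f.eval (x : ℂ)) σ :=
    fun f => hintC _ (f.continuous_aeval.comp Complex.continuous_ofReal)
  -- even polynomials give T f = 0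
  have heven : ∀ f : Polynomial ℂ, (∀ x : ℝ, f.eval (-(x:ℂ)) = f.eval (x:ℂ)) → T f = 0 := by
    intro f hf
    rw [hT f]
    simp_rw [hf, sub_self]
  -- odd nonneg polynomials give 0 ≤ T f
  have hodd : ∀ f : Polynomial ℂ, (∀ x : ℝ, f.eval (-(x:ℂ)) = - f.eval (x:ℂ)) →
      (∀ x ∈ Set.Icc a b, 0 ≤ f.eval (x:ℂ)) → 0 ≤ T f := by
    intro f hf hpos
    rw [hT f]
    simp_rw [hf]
    rw [integral_neg, sub_neg_eq_add]
    have hint' := hint f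
    have h1 : 0 ≤ ∫ x : ℝ, f.eval (x:ℂ) ∂σ := by
      rw [Complex.le_def]
      constructor
      · have hre := integral_re hint'
        simp only [RCLike.re_to_complex] at hre
        rw [Complex.zero_re, ← hre]
        apply integral_nonneg_of_ae
        filter_upwards [hmem] with x hx
        simpa using (Complex.le_def.mp (hpos x hx)).1
      · have him := integral_im hint'
        simp only [RCLike.im_to_complex] at him
        rw [Complex.zero_im, ← him]
        have hz : ∀ᵐ x : ℝ ∂σ, (f.eval (x:ℂ)).im = (0 : ℝ) := by
          filter_upwards [hmem] with x hx
          simpa using ((Complex.le_def.mp (hpos x hx)).2).symm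
        rw [integral_congr_ae hz, integral_zero]
    exact add_nonneg h1 h1
  constructor
  · intro k p
    set q := p.map (starRingEnd ℂ) * p with hq
    have hqnn : ∀ x : ℝ, 0 ≤ q.eval ((x:ℂ)^2) := by
      intro x
      have : ((x:ℂ)^2) = ((x^2 : ℝ) : ℂ) := by push_cast; ring
      rw [this, hq, eval_mul, eval_map_conj']
      exact star_mul_self_nonneg _
    fin_cases k
    · constructor
      · refine le_of_eq (heven _ ?_).symm
        intro x
        simp [eval_comp, neg_sq]
      · refine le_of_eq (heven _ ?_).symm
        intro x
        simp [eval_comp, neg_sq]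
    · constructor
      · refine hodd _ (fun x => ?_) (fun x hx => ?_)
        · simp [eval_comp, neg_sq]
        · simp only [eval_mul, eval_comp, eval_pow, eval_X, pow_one]
          refine mul_nonneg (hqnn x) ?_
          rw [show ((0:ℂ)) = ((0:ℝ):ℂ) by norm_num, Complex.real_le_real]
          exact le_of_lt (lt_of_lt_of_le ha hx.1)
      · refine hodd _ (fun x => ?_) (fun x hx => ?_)
        · simp [eval_comp, neg_sq]
        · have hx0 : (0:ℝ) ≤ x := le_of_lt (lt_of_lt_of_le ha hx.1)
          simp only [eval_mul, eval_comp, eval_pow, eval_X, pow_one]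
          refine mul_nonneg (mul_nonneg ?_ (hqnn x)) ?_
          · rw [show ((x:ℂ)^2) = (((x^2 : ℝ)) : ℂ) by push_cast; ring,
              show ((0:ℂ)) = ((0:ℝ):ℂ) by norm_num, Complex.real_le_real]
            positivity
          · rw [show ((0:ℂ)) = ((0:ℝ):ℂ) by norm_num, Complex.real_le_real]
            exact hx0
  · refine ⟨X - C 1, ?_⟩
    have hmap : (X - C 1 : Polynomial ℂ).map (starRingEnd ℂ) = X - C 1 := by
      rw [Polynomial.map_sub, Polynomial.map_X, Polynomial.map_C, map_one]
    rw [hmap, hT]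
    have he1 : ∀ x : ℝ, ((X - C 1 : Polynomial ℂ) * (X - C 1)).eval (x:ℂ)
        = (((x - 1)^2 : ℝ) : ℂ) := by
      intro x
      push_cast
      simp [eval_mul]
      ring
    have he2 : ∀ x : ℝ, ((X - C 1 : Polynomial ℂ) * (X - C 1)).eval (-(x:ℂ))
        = (((x + 1)^2 : ℝ) : ℂ) := by
      intro x
      push_cast
      simp [eval_mul]
      ring
    simp_rw [he1, he2]
    have hcast : ∀ g : ℝ → ℝ, (∫ x : ℝ, ((g x : ℝ) : ℂ) ∂σ) = ((∫ x : ℝ, g x ∂σ : ℝ) : ℂ) :=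
      fun g => integral_ofReal (𝕜 := ℂ)
    rw [hcast, hcast]
    have hi1 : Integrable (fun x : ℝ => (x - 1)^2) σ := hintR _ ((continuous_id.sub continuous_const).pow 2)
    have hi2 : Integrable (fun x : ℝ => (x + 1)^2) σ := hintR _ ((continuous_id.add continuous_const).pow 2)
    rw [← Complex.ofReal_sub, ← integral_sub hi1 hi2]
    have hi3 : Integrable (fun x : ℝ => x) σ := hintR _ continuous_id
    have hkey : (∫ x : ℝ, ((x - 1)^2 - (x + 1)^2) ∂σ) = -4 * ∫ x : ℝ, x ∂σ := by
      rw [← integral_const_mul]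
      congr 1
      funext x
      ring
    rw [hkey]
    have hμ : 0 < (σ Set.univ).toReal := by
      refine ENNReal.toReal_pos ?_ (measure_ne_top σ _)
      simpa [Measure.measure_univ_eq_zero] using hσ
    have hia : Integrable (fun _ : ℝ => a) σ := integrable_const a
    have hmono : a * (σ Set.univ).toReal ≤ ∫ x : ℝ, x ∂σ := by
      have := integral_mono_ae hia hi3 (by filter_upwards [hmem] with x hx; exact hx.1)
      simp [mul_comm] at this
      exact this
    have hpos : 0 < ∫ x : ℝ, x ∂σ := lt_of_lt_of_le (by positivity) hmono
    rw [show ((0:ℂ)) = ((0:ℝ):ℂ) by norm_num, Complex.real_lt_real]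
    nlinarith
end
end
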